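/- Let e ≥ 1 and k be natural numbers with k < 2^(e-1). Then the rational number S = ∑_{i=0}^{k} ( C(2^e+2k+1, i)⁻¹ − C(2k+1, i)⁻¹ ) satisfies: either S = 0 or ν(S) ≥ e − 2·lg(k+2) + 2·ν(k+1). -/

import Mathlib

open Finset Nat

section Stmt2Aux

lemma pn_nat {m : ℕ} (hm : m ≠ 0) :
    padicNorm 2 (m : ℚ) = (2:ℚ) ^ (-(padicValNat 2 m : ℤ)) := by
  rw [padicNorm.eq_zpow_of_nonzero (by exact_mod_cast hm)]
  norm_num [padicValRat.of_nat]

-- valuation of 2^e + m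


lemma val_pow_add {e m : ℕ} (hm : m ≠ 0) (h : padicValNat 2 m < e) :
    padicValNat 2 (2^e + m) = padicValNat 2 m := by
  have h1 : (2:ℕ)^(padicValNat 2 m) ∣ m := pow_padicValNat_dvd
  have h2 : ¬ (2:ℕ)^(padicValNat 2 m + 1) ∣ m := pow_succ_padicValNat_not_dvd hm
  have hne : 2^e + m ≠ 0 := by positivity
  have h3 : (2:ℕ)^(padicValNat 2 m) ∣ 2^e + m :=
    Dvd.dvd.add (pow_dvd_pow 2 h.le) h1
  have h4 : ¬ (2:ℕ)^(padicValNat 2 m + 1) ∣ 2^e + m := by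
    intro hdvd
    exact h2 ((Nat.dvd_add_right (pow_dvd_pow 2 h)).mp hdvd)
  have h5 := (padicValNat_dvd_iff_le hne).mp h3
  have h6 : ¬ (padicValNat 2 m + 1 ≤ padicValNat 2 (2^e+m)) :=
    fun hle => h4 ((padicValNat_dvd_iff_le hne).mpr hle)
  omega

-- multiplicative perturbation lemmas


lemma mul_sub_one_le {u v δ : ℚ} (hδ : δ ≤ 1)
    (hu : padicNorm 2 (u - 1) ≤ δ) (hv : padicNorm 2 (v - 1) ≤ δ) :
    padicNorm 2 (u * v - 1) ≤ δ := by
  have hv1 : padicNorm 2 v ≤ 1 := by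
    have : v = (v - 1) + 1 := by ring
    rw [this]
    refine le_trans padicNorm.nonarchimedean ?_
    simp [padicNorm.one]
    exact le_trans hv hδ
  have : u * v - 1 = (u - 1) * v + (v - 1) := by ring
  rw [this]
  refine le_trans padicNorm.nonarchimedean (max_le ?_ hv)
  rw [padicNorm.mul]
  calc padicNorm 2 (u-1) * padicNorm 2 v ≤ δ * 1 :=
        mul_le_mul hu hv1 (padicNorm.nonneg _) (le_trans (padicNorm.nonneg _) hu)
    _ = δ := by ring


lemma prod_sub_one_le {s : Finset ℕ} {f : ℕ → ℚ} {δ : ℚ} (hδ0 : 0 ≤ δ) (hδ : δ ≤ 1)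
    (h : ∀ a ∈ s, padicNorm 2 (f a - 1) ≤ δ) :
    padicNorm 2 ((∏ a ∈ s, f a) - 1) ≤ δ := by
  classical
  induction s using Finset.induction with
  | empty => simpa [padicNorm.zero] using hδ0
  | @insert b s' hb ih =>
    rw [Finset.prod_insert hb]
    exact mul_sub_one_le hδ (h b (Finset.mem_insert_self b s'))
      (ih fun a ha => h a (Finset.mem_insert_of_mem ha))

-- regrouping a sum over range (2*m) into pairs


lemma sum_range_two_mul (g : ℕ → ℚ) (m : ℕ) :
    ∑ i ∈ range (2*m), g i = ∑ j ∈ range m, (g (2*j) + g (2*j+1)) := by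
  induction m with
  | zero => simp
  | succ m ih =>
    have : 2*(m+1) = (2*m + 1) + 1 := by ring
    rw [this, Finset.sum_range_succ, Finset.sum_range_succ, ih, Finset.sum_range_succ]
    ring


lemma mu_le_lam (k : ℕ) : padicValNat 2 (k+1) ≤ Nat.log 2 (k+2) := by
  have h1 : (2:ℕ)^(padicValNat 2 (k+1)) ≤ k+1 :=
    Nat.le_of_dvd (by omega) pow_padicValNat_dvd
  have h2 : k+2 < 2^(Nat.log 2 (k+2) + 1) := Nat.lt_pow_succ_log_self (by norm_num) _
  have h3 : (2:ℕ)^(padicValNat 2 (k+1)) < 2^(Nat.log 2 (k+2) + 1) := by omega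
  have := (Nat.pow_lt_pow_iff_right (a := 2) (by norm_num)).mp h3
  omega

-- generic carry bound : c_t + μ ≤ λ


lemma carries_le (k t : ℕ) (ht : t ≤ k) :
    padicValNat 2 ((2*k+1).choose t) + padicValNat 2 (k+1) ≤ Nat.log 2 (k+2) := by
  set lam := Nat.log 2 (k+2) with hlam
  set mu := padicValNat 2 (k+1) with hmu
  have hk2 : k + 2 < 2^(lam+1) := Nat.lt_pow_succ_log_self (by norm_num) _
  have hlog : Nat.log 2 (2*k+1) < lam + 2 := by
    apply Nat.log_lt_of_lt_pow (by omega)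
    have : (2:ℕ)^(lam+2) = 2 * 2^(lam+1) := by ring
    omega
  have hc := padicValNat_choose (p := 2) (n := 2*k+1) (k := t) (b := lam+2)
    (by omega) hlog
  rw [hc]
  have hsub : ((Finset.Ico 1 (lam+2)).filter
      fun i => 2 ^ i ≤ t % 2 ^ i + (2*k+1 - t) % 2 ^ i) ⊆ Finset.Ico (mu+2) (lam+2) := by
    intro i hi
    rw [Finset.mem_filter, Finset.mem_Ico] at hi
    obtain ⟨⟨hi1, hi2⟩, hP⟩ := hi
    rw [Finset.mem_Ico]
    refine ⟨?_, hi2⟩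
    by_contra hcon
    push_neg at hcon
    -- i ≤ mu + 1, so 2^i ∣ 2k+2
    have hdvd : (2:ℕ)^i ∣ 2*k+2 := by
      have h1 : (2:ℕ)^mu ∣ k+1 := pow_padicValNat_dvd
      obtain ⟨c, hc⟩ := h1
      have h2 : (2:ℕ)^(mu+1) ∣ 2*k+2 := by
        refine ⟨c, ?_⟩
        have he2 : 2*k+2 = 2*(k+1) := by ring
        rw [he2, hc, pow_succ]
        ring
      exact dvd_trans (pow_dvd_pow 2 (show i ≤ mu+1 by omega)) h2
    have hpow2 : (2:ℕ) ≤ 2^i := by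
      calc (2:ℕ) = 2^1 := rfl
      _ ≤ 2^i := Nat.pow_le_pow_right (by norm_num) hi1
    -- n % 2^i = 2^i - 1 where n = 2k+1
    have hmod : (2*k+1) % 2^i = 2^i - 1 := by
      have h0 : (2*k+2) % 2^i = 0 := Nat.mod_eq_zero_of_dvd hdvd
      set a := (2*k+1) % 2^i with ha
      have h1 : a < 2^i := Nat.mod_lt _ (by positivity)
      have h2 : (a + 1) % 2^i = 0 := by
        have hadd := Nat.add_mod (2*k+1) 1 (2^i)
        have h1m : 1 % 2^i = 1 := Nat.mod_eq_of_lt (by omega)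
        rw [h1m] at hadd
        rw [ha, ← hadd]
        exact h0
      rcases Nat.lt_or_ge (a+1) (2^i) with hlt | hge
      · exfalso; have := Nat.mod_eq_of_lt hlt; omega
      · omega
    set a := t % 2^i with ha
    set b := (2*k+1-t) % 2^i with hb
    have hab : (a + b) % 2^i = 2^i - 1 := by
      rw [ha, hb, ← Nat.add_mod]
      have : t + (2*k+1-t) = 2*k+1 := by omega
      rw [this, hmod]
    have halt : a < 2^i := Nat.mod_lt _ (by omega)
    have hblt : b < 2^i := Nat.mod_lt _ (by omega)
    -- hP : 2^i ≤ a + b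
    have hsub' : (a+b) % 2^i = (a+b-2^i) % 2^i := Nat.mod_eq_sub_mod hP
    have : (a+b-2^i) % 2^i = a+b-2^i := Nat.mod_eq_of_lt (by omega)
    omega
  have hcard := Finset.card_le_card hsub
  rw [Nat.card_Ico] at hcard
  have := mu_le_lam k
  omega


lemma carries_single (k : ℕ) (hk2 : 2 ≤ k) (hke : k % 2 = 0) :
    padicValNat 2 ((2*k+1).choose k) + 1 ≤ Nat.log 2 (k+2) := by
  set lam := Nat.log 2 (k+2) with hlam
  have hk2lt : k + 2 < 2^(lam+1) := Nat.lt_pow_succ_log_self (by norm_num) _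
  have hlam2 : 2 ≤ lam := Nat.le_log_of_pow_le (by norm_num) (by omega)
  -- existence of a zero bit j0 ∈ [1, lam]
  have hex : ∃ j, 1 ≤ j ∧ j ≤ lam ∧ k % 2^(j+1) < 2^j := by
    by_contra hcon
    push_neg at hcon
    have key : ∀ j, j ≤ lam → k % 2^(j+1) = 2^(j+1) - 2 := by
      intro j
      induction j with
      | zero => intro _; simpa using hke
      | succ j ih =>
        intro hj
        have h1 := ih (by omega)
        have h2 := hcon (j+1) (by omega) hj
        set x := k % 2^(j+2) with hx
        have hxlt : x < 2^(j+2) := Nat.mod_lt _ (by positivity)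
        have hmm : x % 2^(j+1) = k % 2^(j+1) :=
          Nat.mod_mod_of_dvd k (pow_dvd_pow 2 (by omega))
        have hge : 2^(j+1) ≤ x := h2
        have hsub : x % 2^(j+1) = (x - 2^(j+1)) % 2^(j+1) := Nat.mod_eq_sub_mod hge
        have hpow : (2:ℕ)^(j+2) = 2 * 2^(j+1) := by ring
        have hlt2 : x - 2^(j+1) < 2^(j+1) := by omega
        have := Nat.mod_eq_of_lt hlt2
        omega
    have hfin := key lam le_rfl
    have hklt : k < 2^(lam+1) := by omega
    have : k % 2^(lam+1) = k := Nat.mod_eq_of_lt hklt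
    omega
  obtain ⟨j0, hj01, hj0lam, hj0bit⟩ := hex
  -- Kummer
  have hsubk : 2*k+1 - k = k+1 := by omega
  have hlog : Nat.log 2 (2*k+1) < lam + 2 := by
    apply Nat.log_lt_of_lt_pow (by omega)
    have : (2:ℕ)^(lam+2) = 2 * 2^(lam+1) := by ring
    omega
  have hc := padicValNat_choose (p := 2) (n := 2*k+1) (k := k) (b := lam+2)
    (by omega) hlog
  rw [hsubk] at hc
  rw [hc]
  have hsub : ((Finset.Ico 1 (lam+2)).filter
      fun i => 2 ^ i ≤ k % 2 ^ i + (k+1) % 2 ^ i) ⊆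
      ((Finset.Ico 1 (lam+2)).erase 1).erase (j0+1) := by
    intro i hi
    rw [Finset.mem_filter] at hi
    obtain ⟨hIco, hP⟩ := hi
    rw [Finset.mem_erase, Finset.mem_erase]
    refine ⟨?_, ?_, hIco⟩
    · -- i ≠ j0 + 1
      intro hieq
      subst hieq
      have hm1 : k % 2^(j0+1) + 1 < 2^(j0+1) := by
        have : (2:ℕ)^j0 < 2^(j0+1) := by
          have : (2:ℕ)^(j0+1) = 2 * 2^j0 := by ring
          have : (0:ℕ) < 2^j0 := by positivity
          omega
        omega
      have hsucc : (k+1) % 2^(j0+1) = k % 2^(j0+1) + 1 := by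
        have hadd := Nat.add_mod k 1 (2^(j0+1))
        have h1m : 1 % 2^(j0+1) = 1 := Nat.mod_eq_of_lt (by
          have : (2:ℕ) ≤ 2^(j0+1) := by
            calc (2:ℕ) = 2^1 := rfl
            _ ≤ 2^(j0+1) := Nat.pow_le_pow_right (by norm_num) (by omega)
          omega)
        rw [h1m] at hadd
        rw [hadd]
        exact Nat.mod_eq_of_lt hm1
      rw [hsucc] at hP
      have : (2:ℕ)^(j0+1) = 2 * 2^j0 := by ring
      omega
    · -- i ≠ 1
      intro hieq
      subst hieq
      have h1 : k % 2 = 0 := hke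
      have h2 : (k+1) % 2 = 1 := by omega
      rw [pow_one] at hP
      omega
  have hcard := Finset.card_le_card hsub
  have h1mem : (1:ℕ) ∈ Finset.Ico 1 (lam+2) := by
    rw [Finset.mem_Ico]; omega
  have hj0mem : j0+1 ∈ (Finset.Ico 1 (lam+2)).erase 1 := by
    rw [Finset.mem_erase, Finset.mem_Ico]
    exact ⟨by omega, by omega, by omega⟩
  rw [Finset.card_erase_of_mem hj0mem, Finset.card_erase_of_mem h1mem, Nat.card_Ico] at hcard
  omega


lemma ratio_prod_bound (e n r lam : ℕ) (hr : r ≤ n) (hne : n < 2^e) (hnl : n < 2^(lam+2))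
    (hle : lam + 1 ≤ e) :
    padicNorm 2 ((∏ s ∈ range r, (((n - s : ℕ) : ℚ) / ((2^e + n - s : ℕ) : ℚ))) - 1)
      ≤ (2:ℚ) ^ ((lam : ℤ) + 1 - e) := by
  have hδ0 : (0:ℚ) ≤ (2:ℚ) ^ ((lam : ℤ) + 1 - e) := by positivity
  have hδ1 : (2:ℚ) ^ ((lam : ℤ) + 1 - e) ≤ 1 := by
    calc (2:ℚ) ^ ((lam : ℤ) + 1 - e) ≤ (2:ℚ)^(0:ℤ) :=
          zpow_le_zpow_right₀ one_le_two (by omega)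
      _ = 1 := zpow_zero 2
  apply prod_sub_one_le hδ0 hδ1
  intro s hs
  rw [Finset.mem_range] at hs
  have hs' : s < n := by omega
  have ha0 : n - s ≠ 0 := by omega
  have hA : 2^e + n - s = 2^e + (n - s) := by omega
  have hA0 : 2^e + n - s ≠ 0 := by omega
  have hApos : ((2^e + n - s : ℕ) : ℚ) ≠ 0 := by exact_mod_cast hA0
  set va := padicValNat 2 (n - s) with hva
  have hvae : va < e := by
    have h1 : va ≤ Nat.log 2 (n - s) := padicValNat_le_nat_log _
    have h2 : Nat.log 2 (n-s) < e := Nat.log_lt_of_lt_pow ha0 (by omega)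
    omega
  have hval : va ≤ lam + 1 := by
    have h1 : va ≤ Nat.log 2 (n - s) := padicValNat_le_nat_log _
    have h2 : Nat.log 2 (n-s) < lam+2 := Nat.log_lt_of_lt_pow ha0 (by omega)
    omega
  have hvA : padicValNat 2 (2^e + n - s) = va := by
    rw [hA]; exact val_pow_add ha0 hvae
  -- the factor minus one
  have hfac : (((n - s : ℕ) : ℚ) / ((2^e + n - s : ℕ) : ℚ)) - 1
      = -(((2^e : ℕ) : ℚ) / ((2^e + n - s : ℕ) : ℚ)) := by
    have hcast : ((2^e + n - s : ℕ) : ℚ) = ((2^e : ℕ) : ℚ) + ((n - s : ℕ) : ℚ) := by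
      rw [hA]; push_cast; ring
    field_simp
    rw [hcast]; push_cast; ring
  rw [hfac, padicNorm.neg, padicNorm.div, pn_nat (by positivity), pn_nat hA0,
    padicValNat.prime_pow, hvA, ← zpow_sub₀ (by norm_num : (2:ℚ) ≠ 0)]
  apply zpow_le_zpow_right₀ one_le_two
  omega


lemma inv_choose_pair (m t : ℕ) (h : t + 1 ≤ m) :
    ((m.choose t : ℚ))⁻¹ + ((m.choose (t+1) : ℚ))⁻¹
      = (((m + 1 : ℕ)) : ℚ) / (((m - t : ℕ) : ℚ) * (m.choose t : ℚ)) := by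
  have h0 : (m.choose t : ℚ) ≠ 0 := by
    exact_mod_cast Nat.choose_pos (by omega : t ≤ m) |>.ne'
  have h1 : (m.choose (t+1) : ℚ) ≠ 0 := by
    exact_mod_cast Nat.choose_pos (by omega : t + 1 ≤ m) |>.ne'
  have h2 : ((m - t : ℕ) : ℚ) ≠ 0 := by
    have : m - t ≠ 0 := by omega
    exact_mod_cast this
  have hch : (m.choose (t+1) : ℚ) * ((t:ℚ)+1) = (m.choose t : ℚ) * ((m - t : ℕ) : ℚ) := by
    exact_mod_cast congrArg (Nat.cast (R := ℚ)) (Nat.choose_succ_right_eq m t)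
  have hmt : ((m - t : ℕ) : ℚ) = (m : ℚ) - t := by
    have : (t:ℚ) ≤ (m:ℚ) := by exact_mod_cast (by omega : t ≤ m)
    push_cast [Nat.cast_sub (by omega : t ≤ m)]
    ring
  have hm1 : (((m+1:ℕ)):ℚ) = (m:ℚ) + 1 := by push_cast; ring
  rw [hm1]
  rw [hmt] at hch h2 ⊢
  field_simp
  linear_combination (-1 : ℚ) * hch


lemma pair_bound (e k t : ℕ) (hk : 2*k+1 < 2^e) (ht : t + 1 ≤ k) (hte : t % 2 = 0)
    (hle : Nat.log 2 (k+2) + 1 ≤ e) :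
    padicNorm 2 ((((2^e + (2*k+1)).choose t : ℚ))⁻¹ - (((2*k+1).choose t : ℚ))⁻¹
        + ((((2^e + (2*k+1)).choose (t+1) : ℚ))⁻¹ - (((2*k+1).choose (t+1) : ℚ))⁻¹))
      ≤ (2:ℚ) ^ (-((e:ℤ) - 2*(Nat.log 2 (k+2) : ℤ) + 2*(padicValNat 2 (k+1) : ℤ))) := by
  set lam := Nat.log 2 (k+2) with hlam
  set mu := padicValNat 2 (k+1) with hmu
  set n := 2*k+1 with hn
  set N := 2^e + (2*k+1) with hN
  have hk2lt : k + 2 < 2^(lam+1) := Nat.lt_pow_succ_log_self (by norm_num) _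
  have htn : t + 1 ≤ n := by omega
  have htN : t + 1 ≤ N := by omega
  have h1 := inv_choose_pair n t htn
  have h2 := inv_choose_pair N t htN
  -- nonzero facts
  have hcn0 : ((n.choose t : ℕ) : ℚ) ≠ 0 := by
    exact_mod_cast Nat.choose_pos (by omega : t ≤ n) |>.ne'
  have hcN0 : ((N.choose t : ℕ) : ℚ) ≠ 0 := by
    exact_mod_cast Nat.choose_pos (by omega : t ≤ N) |>.ne'
  have hnt0 : ((n - t : ℕ) : ℚ) ≠ 0 := by
    have : n - t ≠ 0 := by omega
    exact_mod_cast this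
  have hNt0 : ((N - t : ℕ) : ℚ) ≠ 0 := by
    have : N - t ≠ 0 := by omega
    exact_mod_cast this
  have hn10 : ((n + 1 : ℕ) : ℚ) ≠ 0 := by
    have : n + 1 ≠ 0 := by omega
    exact_mod_cast this
  have hN10 : ((N + 1 : ℕ) : ℚ) ≠ 0 := by
    have : N + 1 ≠ 0 := by omega
    exact_mod_cast this
  have hdn0 : ((n.descFactorial (t+1) : ℕ) : ℚ) ≠ 0 := by
    have : n.descFactorial (t+1) ≠ 0 := by
      intro h
      rw [Nat.descFactorial_eq_zero_iff_lt] at h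
      omega
    exact_mod_cast this
  have hdN0 : ((N.descFactorial (t+1) : ℕ) : ℚ) ≠ 0 := by
    have : N.descFactorial (t+1) ≠ 0 := by
      intro h
      rw [Nat.descFactorial_eq_zero_iff_lt] at h
      omega
    exact_mod_cast this
  -- the product form
  set R : ℚ := (((N + 1 : ℕ)) : ℚ) / (((n + 1 : ℕ)) : ℚ)
      * ∏ s ∈ range (t+1), (((n - s : ℕ) : ℚ) / ((2^e + n - s : ℕ) : ℚ)) with hR
  have hprodcast : ∀ s ∈ range (t+1), ((2^e + n - s : ℕ) : ℚ) = ((N - s : ℕ) : ℚ) := by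
    intro s hs
    have hh : 2^e + n - s = N - s := by omega
    rw [hh]
  have hprod : ∏ s ∈ range (t+1), (((n - s : ℕ) : ℚ) / ((2^e + n - s : ℕ) : ℚ))
      = ((n.descFactorial (t+1) : ℕ) : ℚ) / ((N.descFactorial (t+1) : ℕ) : ℚ) := by
    rw [Finset.prod_congr rfl (fun s hs => by rw [hprodcast s hs]),
      Finset.prod_div_distrib]
    congr 1
    · rw [Nat.descFactorial_eq_prod_range, Nat.cast_prod]
    · rw [Nat.descFactorial_eq_prod_range, Nat.cast_prod]
  -- key ℕ identity
  have hkey : (n - t) * (n.choose t) * N.descFactorial (t+1)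
      = (N - t) * (N.choose t) * n.descFactorial (t+1) := by
    rw [Nat.descFactorial_succ, Nat.descFactorial_succ,
      Nat.descFactorial_eq_factorial_mul_choose, Nat.descFactorial_eq_factorial_mul_choose]
    ring
  have hkeyQ : ((n - t : ℕ) : ℚ) * ((n.choose t : ℕ) : ℚ) * ((N.descFactorial (t+1) : ℕ) : ℚ)
      = ((N - t : ℕ) : ℚ) * ((N.choose t : ℕ) : ℚ) * ((n.descFactorial (t+1) : ℕ) : ℚ) := by
    exact_mod_cast congrArg (Nat.cast (R := ℚ)) hkey
  -- Q_N = Q_n * R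
  have hQR : (((N + 1 : ℕ)) : ℚ) / (((N - t : ℕ) : ℚ) * (N.choose t : ℚ))
      = (((n + 1 : ℕ)) : ℚ) / (((n - t : ℕ) : ℚ) * (n.choose t : ℚ)) * R := by
    rw [hR, hprod,
      div_mul_div_comm (((N+1:ℕ)):ℚ) (((n+1:ℕ)):ℚ)
        ((n.descFactorial (t+1) : ℕ) : ℚ) ((N.descFactorial (t+1) : ℕ) : ℚ),
      div_mul_div_comm (((n+1:ℕ)):ℚ) ((((n - t : ℕ)):ℚ) * (n.choose t : ℚ)),
      div_eq_div_iff (mul_ne_zero hNt0 hcN0)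
        (mul_ne_zero (mul_ne_zero hnt0 hcn0) (mul_ne_zero hn10 hdN0))]
    linear_combination (((n+1:ℕ)):ℚ) * (((N+1:ℕ)):ℚ) * hkeyQ
  -- the sum of the four terms equals Qn * (R - 1)
  have hsum : (((N.choose t : ℕ) : ℚ))⁻¹ - (((n.choose t : ℕ) : ℚ))⁻¹
        + ((((N.choose (t+1) : ℕ)) : ℚ)⁻¹ - (((n.choose (t+1) : ℕ)) : ℚ)⁻¹)
      = (((n + 1 : ℕ)) : ℚ) / (((n - t : ℕ) : ℚ) * (n.choose t : ℚ)) * (R - 1) := by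
    have e1 : (((N.choose t : ℕ) : ℚ))⁻¹ - (((n.choose t : ℕ) : ℚ))⁻¹
        + ((((N.choose (t+1) : ℕ)) : ℚ)⁻¹ - (((n.choose (t+1) : ℕ)) : ℚ)⁻¹)
        = ((((N.choose t : ℕ) : ℚ))⁻¹ + (((N.choose (t+1) : ℕ)) : ℚ)⁻¹)
          - ((((n.choose t : ℕ) : ℚ))⁻¹ + (((n.choose (t+1) : ℕ)) : ℚ)⁻¹) := by ring
    rw [e1, h1, h2, hQR]
    ring
  rw [hsum, padicNorm.mul]
  -- norm of Qn
  have hoddnt : ¬ (2 ∣ (n - t)) := by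
    intro ⟨c, hc⟩
    omega
  have hn1val : padicValNat 2 (n+1) = 1 + mu := by
    have hrw : n + 1 = 2 * (k+1) := by omega
    rw [hrw, padicValNat.mul (by norm_num) (by omega)]
    rw [padicValNat.self (by norm_num)]
  have hQnorm : padicNorm 2 ((((n + 1 : ℕ)) : ℚ) / (((n - t : ℕ) : ℚ) * (n.choose t : ℚ)))
      = (2:ℚ) ^ ((padicValNat 2 (n.choose t) : ℤ) - 1 - mu) := by
    have e1 : padicNorm 2 (((n+1:ℕ)) : ℚ) = (2:ℚ) ^ (-(1 + (mu:ℤ))) := by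
      rw [pn_nat (by omega : n + 1 ≠ 0), hn1val]
      congr 1
    have e2 : padicNorm 2 (((n-t:ℕ)) : ℚ) = 1 := (padicNorm.nat_eq_one_iff _).mpr hoddnt
    have e3 : padicNorm 2 ((n.choose t : ℕ) : ℚ)
        = (2:ℚ) ^ (-(padicValNat 2 (n.choose t) : ℤ)) :=
      pn_nat (Nat.choose_pos (by omega : t ≤ n)).ne'
    rw [padicNorm.div, padicNorm.mul, e1, e2, e3, one_mul,
      ← zpow_sub₀ (by norm_num : (2:ℚ) ≠ 0)]
    congr 1
    ring
  rw [hQnorm]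
  -- norm of R - 1
  have hδ1 : (2:ℚ) ^ ((lam : ℤ) + 1 - e) ≤ 1 := by
    calc (2:ℚ) ^ ((lam : ℤ) + 1 - e) ≤ (2:ℚ)^(0:ℤ) :=
          zpow_le_zpow_right₀ one_le_two (by omega)
      _ = 1 := zpow_zero 2
  have hRnorm : padicNorm 2 (R - 1) ≤ (2:ℚ) ^ ((lam : ℤ) + 1 - e) := by
    rw [hR]
    apply mul_sub_one_le hδ1
    · -- (N+1)/(n+1) - 1 = 2^e/(n+1)
      have hc : (((N + 1 : ℕ)) : ℚ) / (((n + 1 : ℕ)) : ℚ) - 1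
          = (((2^e : ℕ)) : ℚ) / (((n + 1 : ℕ)) : ℚ) := by
        field_simp
        rw [hN, hn]
        push_cast
        ring
      rw [hc, padicNorm.div, pn_nat (by positivity), pn_nat (by omega : n + 1 ≠ 0),
        padicValNat.prime_pow, hn1val, ← zpow_sub₀ (by norm_num : (2:ℚ) ≠ 0)]
      apply zpow_le_zpow_right₀ one_le_two
      have := mu_le_lam k
      omega
    · exact ratio_prod_bound e n (t+1) lam (by omega) (by omega)
        (by
          have : (2:ℕ)^(lam+2) = 2 * 2^(lam+1) := by ring
          omega) (by omega)
  -- combine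
  calc (2:ℚ) ^ ((padicValNat 2 (n.choose t) : ℤ) - 1 - mu) * padicNorm 2 (R - 1)
      ≤ (2:ℚ) ^ ((padicValNat 2 (n.choose t) : ℤ) - 1 - mu) * (2:ℚ) ^ ((lam : ℤ) + 1 - e) := by
        apply mul_le_mul_of_nonneg_left hRnorm (by positivity)
    _ = (2:ℚ) ^ (((padicValNat 2 (n.choose t) : ℤ) - 1 - mu) + ((lam : ℤ) + 1 - e)) := by
        rw [← zpow_add₀ (by norm_num : (2:ℚ) ≠ 0)]
    _ ≤ (2:ℚ) ^ (-((e:ℤ) - 2*(lam : ℤ) + 2*(mu : ℤ))) := by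
        apply zpow_le_zpow_right₀ one_le_two
        have hcle := carries_le k t (by omega)
        rw [← hn] at hcle
        omega


lemma single_bound (e k : ℕ) (hk : 2*k+1 < 2^e) (hk2 : 2 ≤ k) (hke : k % 2 = 0)
    (hle : Nat.log 2 (k+2) + 1 ≤ e) :
    padicNorm 2 ((((2^e + (2*k+1)).choose k : ℚ))⁻¹ - (((2*k+1).choose k : ℚ))⁻¹)
      ≤ (2:ℚ) ^ (-((e:ℤ) - 2*(Nat.log 2 (k+2) : ℤ) + 2*(padicValNat 2 (k+1) : ℤ))) := by
  set lam := Nat.log 2 (k+2) with hlam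
  set n := 2*k+1 with hn
  set N := 2^e + (2*k+1) with hN
  have hk2lt : k + 2 < 2^(lam+1) := Nat.lt_pow_succ_log_self (by norm_num) _
  have hmu : padicValNat 2 (k+1) = 0 :=
    padicValNat.eq_zero_of_not_dvd (by omega)
  have hcn0 : ((n.choose k : ℕ) : ℚ) ≠ 0 := by
    exact_mod_cast Nat.choose_pos (by omega : k ≤ n) |>.ne'
  have hcN0 : ((N.choose k : ℕ) : ℚ) ≠ 0 := by
    exact_mod_cast Nat.choose_pos (by omega : k ≤ N) |>.ne'
  have hdn0 : ((n.descFactorial k : ℕ) : ℚ) ≠ 0 := by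
    have : n.descFactorial k ≠ 0 := by
      intro h; rw [Nat.descFactorial_eq_zero_iff_lt] at h; omega
    exact_mod_cast this
  have hdN0 : ((N.descFactorial k : ℕ) : ℚ) ≠ 0 := by
    have : N.descFactorial k ≠ 0 := by
      intro h; rw [Nat.descFactorial_eq_zero_iff_lt] at h; omega
    exact_mod_cast this
  set R : ℚ := ∏ s ∈ range k, (((n - s : ℕ) : ℚ) / ((2^e + n - s : ℕ) : ℚ)) with hR
  have hprodcast : ∀ s ∈ range k, ((2^e + n - s : ℕ) : ℚ) = ((N - s : ℕ) : ℚ) := by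
    intro s hs
    have hh : 2^e + n - s = N - s := by omega
    rw [hh]
  have hprod : R = ((n.descFactorial k : ℕ) : ℚ) / ((N.descFactorial k : ℕ) : ℚ) := by
    rw [hR]
    rw [Finset.prod_congr rfl (fun s hs => by rw [hprodcast s hs]),
      Finset.prod_div_distrib]
    congr 1
    · rw [Nat.descFactorial_eq_prod_range, Nat.cast_prod]
    · rw [Nat.descFactorial_eq_prod_range, Nat.cast_prod]
  have hkey : (n.choose k) * N.descFactorial k = (N.choose k) * n.descFactorial k := by
    rw [Nat.descFactorial_eq_factorial_mul_choose, Nat.descFactorial_eq_factorial_mul_choose]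
    ring
  have hkeyQ : ((n.choose k : ℕ) : ℚ) * ((N.descFactorial k : ℕ) : ℚ)
      = ((N.choose k : ℕ) : ℚ) * ((n.descFactorial k : ℕ) : ℚ) := by
    exact_mod_cast congrArg (Nat.cast (R := ℚ)) hkey
  have hfact : (((N.choose k : ℕ) : ℚ))⁻¹ - (((n.choose k : ℕ) : ℚ))⁻¹
      = (((n.choose k : ℕ) : ℚ))⁻¹ * (R - 1) := by
    rw [hprod]
    field_simp
    linear_combination hkeyQ
  have hinv : padicNorm 2 ((((n.choose k : ℕ)) : ℚ))⁻¹
      = ((2:ℚ) ^ (-(padicValNat 2 (n.choose k) : ℤ)))⁻¹ := by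
    rw [inv_eq_one_div, padicNorm.div, padicNorm.one,
      pn_nat (Nat.choose_pos (by omega : k ≤ n)).ne', one_div]
  rw [hfact, padicNorm.mul, hinv]
  have hRnorm : padicNorm 2 (R - 1) ≤ (2:ℚ) ^ ((lam : ℤ) + 1 - e) := by
    rw [hR]
    exact ratio_prod_bound e n k lam (by omega) (by omega)
      (by
        have : (2:ℕ)^(lam+2) = 2 * 2^(lam+1) := by ring
        omega) (by omega)
  calc ((2:ℚ) ^ (-(padicValNat 2 (n.choose k) : ℤ)))⁻¹ * padicNorm 2 (R - 1)
      ≤ ((2:ℚ) ^ (-(padicValNat 2 (n.choose k) : ℤ)))⁻¹ * (2:ℚ) ^ ((lam : ℤ) + 1 - e) := by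
        apply mul_le_mul_of_nonneg_left hRnorm (by positivity)
    _ = (2:ℚ) ^ ((padicValNat 2 (n.choose k) : ℤ) + ((lam : ℤ) + 1 - e)) := by
        rw [← zpow_neg, neg_neg, ← zpow_add₀ (by norm_num : (2:ℚ) ≠ 0)]
    _ ≤ (2:ℚ) ^ (-((e:ℤ) - 2*(lam : ℤ) + 2*(padicValNat 2 (k+1) : ℤ))) := by
        apply zpow_le_zpow_right₀ one_le_two
        have hcle := carries_single k hk2 hke
        rw [← hn, ← hlam] at hcle
        rw [hmu]
        omega

end Stmt2Aux

/-- e ≥ 1, k < 2^(e-1); S = ∑_{i=0}^k (C(2^e+2k+1,i)⁻¹ − C(2k+1,i)⁻¹) is zero or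
has 2-adic valuation ≥ e − 2·lg(k+2) + 2·ν(k+1). -/
theorem stmt_2 (e k : ℕ) (he : 1 ≤ e) (hk : k < 2 ^ (e - 1))
    (S : ℚ)
    (hS : S = ∑ i ∈ Finset.range (k + 1),
      ((((2 ^ e + 2 * k + 1).choose i : ℚ))⁻¹ - (((2 * k + 1).choose i : ℚ))⁻¹)) :
    S = 0 ∨ padicValRat 2 S ≥
      (e : ℤ) - 2 * (Nat.log 2 (k + 2) : ℤ) + 2 * (padicValNat 2 (k + 1) : ℤ) := by
  by_cases hS0 : S = 0
  · left; exact hS0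
  right
  set B : ℤ := (e : ℤ) - 2 * (Nat.log 2 (k + 2) : ℤ) + 2 * (padicValNat 2 (k + 1) : ℤ) with hB
  have hnorm : padicNorm 2 S ≤ (2:ℚ) ^ (-B) := by
    rcases Nat.eq_zero_or_pos k with rfl | hkpos
    · exfalso; apply hS0; rw [hS]; simp
    have he2 : 2 ≤ e := by
      by_contra hcon
      have he1 : e = 1 := by omega
      subst he1
      simp at hk
      omega
    have h2e : (2:ℕ)^e = 2 * 2^(e-1) := by
      have h1 : e - 1 + 1 = e := by omega
      calc (2:ℕ)^e = 2^(e-1+1) := by rw [h1]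
        _ = 2 * 2^(e-1) := by rw [pow_succ]; ring
    have hn2e : 2*k+1 < 2^e := by omega
    have hle : Nat.log 2 (k+2) + 1 ≤ e := by
      have hee : (2:ℕ)^(e-1) ≥ 2 := by
        calc (2:ℕ)^(e-1) ≥ 2^1 := Nat.pow_le_pow_right (by norm_num) (by omega)
          _ = 2 := by norm_num
      have hk2e : k + 2 < 2^e := by omega
      have := Nat.log_lt_of_lt_pow (by omega : k+2 ≠ 0) hk2e
      omega
    have hNe : 2^e + 2*k + 1 = 2^e + (2*k+1) := by omega
    rw [hS]
    simp only [hNe]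
    rw [hB]
    rcases Nat.even_or_odd k with hke | hko
    · -- k even
      obtain ⟨q, hq⟩ := hke
      have hsplit : range (k + 1) = range (2*q + 1) := by rw [show k+1 = 2*q+1 by omega]
      rw [hsplit, Finset.sum_range_succ, sum_range_two_mul]
      refine le_trans padicNorm.nonarchimedean (max_le ?_ ?_)
      · apply padicNorm.sum_le' _ (by positivity)
        intro j hj
        rw [Finset.mem_range] at hj
        exact pair_bound e k (2*j) hn2e (by omega) (by omega) hle
      · rw [show 2*q = k by omega]
        exact single_bound e k hn2e (by omega) (by omega) hle
    · -- k odd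
      obtain ⟨q', hq'⟩ := hko
      have hsplit : range (k + 1) = range (2*(q'+1)) := by rw [show k+1 = 2*(q'+1) by omega]
      rw [hsplit, sum_range_two_mul]
      apply padicNorm.sum_le' _ (by positivity)
      intro j hj
      rw [Finset.mem_range] at hj
      exact pair_bound e k (2*j) hn2e (by omega) (by omega) hle
  have heq := padicNorm.eq_zpow_of_nonzero (p := 2) hS0
  rw [heq] at hnorm
  have hfin := (zpow_le_zpow_iff_right₀ (by norm_num : (1:ℚ) < 2)).mp hnorm
  omega
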